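/- arXiv:2305.08269 — 2 statements merged into one kernel-verified Lean document; each statement's English description precedes it below -/
import Mathlib

section
/- Let n and L be positive integers with L + 1 ≤ n, let x ∈ {1} × [n]^L be good, and let j ∈ [L]. Then the number of good sequences y ∈ {1} × [n]^L with max{i ∈ [L+1] : (x_1, …, x_i) = (y_1, …, y_i)} = j equals (n − j − 1)·∏_{i=j+2}^{L+1} (n − i + 1). -/
/-- The maximum (1-based) index `j` such that `(x_1, …, x_j) = (y_1, …, y_j)`. -/
def maxPrefix {n L : ℕ} (x y : Fin (L + 1) → Fin n) : ℕ :=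
  ((Finset.Icc 1 (L + 1)).filter fun j => ∀ i : Fin (L + 1), (i : ℕ) < j → x i = y i).sup id

/-- Counting injective sequences extending a fixed prefix of length `k`. -/
lemma card_ext (n L : ℕ) (x : Fin (L + 1) → Fin n)
    (hx : Function.Injective x) (k : ℕ) (hk : k ≤ L + 1) :
    (Finset.univ.filter (fun y : Fin (L + 1) → Fin n =>
      Function.Injective y ∧ ∀ i : Fin (L + 1), (i : ℕ) < k → y i = x i)).card
      = (n - k).descFactorial (L + 1 - k) := by
  classical
  set T := {v : Fin n // ∀ i : Fin (L + 1), (i : ℕ) < k → v ≠ x i} with hT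
  have hcT : Fintype.card T = n - k := by
    rw [Fintype.card_subtype]
    have heq : Finset.univ.filter (fun v : Fin n => ∀ i : Fin (L + 1), (i : ℕ) < k → v ≠ x i)
        = Finset.univ \ Finset.image (fun i : Fin k => x (Fin.castLE hk i)) Finset.univ := by
      ext v
      simp only [Finset.mem_filter, Finset.mem_univ, true_and, Finset.mem_sdiff,
        Finset.mem_image]
      constructor
      · intro h
        rintro ⟨i, -, rfl⟩
        exact h (Fin.castLE hk i) (by simpa using i.isLt) rfl
      · intro h i hi hvi
        refine h ⟨⟨(i : ℕ), hi⟩, ?_⟩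
        rw [hvi]
        congr 1
    have hinj : Function.Injective (fun i : Fin k => x (Fin.castLE hk i)) := by
      intro a b hab
      exact Fin.castLE_injective hk (hx hab)
    rw [heq, Finset.card_sdiff_of_subset (Finset.subset_univ _), Finset.card_univ,
      Finset.card_image_of_injective _ hinj]
    simp
  have e : {y : Fin (L + 1) → Fin n //
      Function.Injective y ∧ ∀ i : Fin (L + 1), (i : ℕ) < k → y i = x i}
      ≃ (Fin (L + 1 - k) ↪ T) := by
    refine
      { toFun := fun y => ⟨fun a => ⟨y.1 ⟨k + a, by have := a.isLt; omega⟩, ?_⟩, ?_⟩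
        invFun := fun g => ⟨fun i =>
          if h : (i : ℕ) < k then x i else (g ⟨(i : ℕ) - k, by have := i.isLt; omega⟩).1,
          ?_, ?_⟩
        left_inv := ?_
        right_inv := ?_ }
    · -- value avoids the prefix
      intro i hi hvi
      rw [← y.2.2 i hi] at hvi
      have := y.2.1 hvi
      have : k + (a : ℕ) = (i : ℕ) := congrArg Fin.val this
      omega
    · -- embedding injectivity
      intro a b hab
      have h1 : y.1 ⟨k + a, by have := a.isLt; omega⟩ = y.1 ⟨k + b, by have := b.isLt; omega⟩ :=
        congrArg Subtype.val hab
      have h2 := y.2.1 h1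
      have : k + (a : ℕ) = k + (b : ℕ) := congrArg Fin.val h2
      exact Fin.ext (by omega)
    · -- invFun injective
      intro i i' h
      by_cases hi : (i : ℕ) < k <;> by_cases hi' : (i' : ℕ) < k
      · simp only [dif_pos hi, dif_pos hi'] at h
        exact hx h
      · simp only [dif_pos hi, dif_neg hi'] at h
        exact absurd h.symm ((g _).2 i hi)
      · simp only [dif_neg hi, dif_pos hi'] at h
        exact absurd h ((g _).2 i' hi')
      · simp only [dif_neg hi, dif_neg hi'] at h
        have := g.injective (Subtype.ext h)
        have : (i : ℕ) - k = (i' : ℕ) - k := congrArg Fin.val this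
        exact Fin.ext (by omega)
    · -- prefix condition
      intro i hi
      simp only [dif_pos hi]
    · -- left inverse
      intro y
      apply Subtype.ext
      funext i
      by_cases hi : (i : ℕ) < k
      · simp only [dif_pos hi]
        exact (y.2.2 i hi).symm
      · simp only [dif_neg hi]
        show y.1 ⟨k + ((i : ℕ) - k), by have := i.isLt; omega⟩ = y.1 i
        exact congrArg y.1 (Fin.ext (by have := i.isLt; simp; omega))
    · -- right inverse
      intro g
      ext a
      have hlt : ¬ (k + (a : ℕ) < k) := by omega
      simp only [Function.Embedding.coeFn_mk, dif_neg hlt]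
      have hidx : (⟨k + (a : ℕ) - k, by have := a.isLt; omega⟩ : Fin (L + 1 - k)) = a :=
        Fin.ext (by show k + (a : ℕ) - k = (a : ℕ); omega)
      exact congrArg (fun t : Fin (L + 1 - k) => (((g t : T) : Fin n) : ℕ)) hidx
  calc (Finset.univ.filter (fun y : Fin (L + 1) → Fin n =>
          Function.Injective y ∧ ∀ i : Fin (L + 1), (i : ℕ) < k → y i = x i)).card
      = Fintype.card {y : Fin (L + 1) → Fin n //
          Function.Injective y ∧ ∀ i : Fin (L + 1), (i : ℕ) < k → y i = x i} :=
        (Fintype.card_subtype _).symm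
    _ = Fintype.card (Fin (L + 1 - k) ↪ T) := Fintype.card_congr e
    _ = (Fintype.card T).descFactorial (Fintype.card (Fin (L + 1 - k))) :=
        Fintype.card_embedding_eq
    _ = (n - k).descFactorial (L + 1 - k) := by rw [hcT, Fintype.card_fin]

/-- Let `n, L` be positive integers with `L + 1 ≤ n`, let
`x ∈ {1} × [n]^L` be good, and let `j ∈ [L]`.  Then the number of good sequences
`y ∈ {1} × [n]^L` with `max{i : (x_1,…,x_i) = (y_1,…,y_i)} = j` equals
`(n − j − 1) · ∏_{i=j+2}^{L+1} (n − i + 1)`. -/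
theorem stmt9 (n L : ℕ) (hn : 0 < n) (hL : 0 < L) (hLn : L + 1 ≤ n)
    (x : Fin (L + 1) → Fin n) (hx0 : x 0 = (⟨0, hn⟩ : Fin n))
    (hxgood : Function.Injective x)
    (j : ℕ) (hj1 : 1 ≤ j) (hjL : j ≤ L) :
    (Finset.univ.filter
        (fun y : Fin (L + 1) → Fin n =>
          y 0 = (⟨0, hn⟩ : Fin n) ∧ Function.Injective y ∧ maxPrefix x y = j)).card =
      (n - j - 1) * ∏ i ∈ Finset.Icc (j + 2) (L + 1), (n - i + 1) := by
  classical
  set jF : Fin (L + 1) := ⟨j, by omega⟩ with hjF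
  -- Characterize the condition
  have hchar : ∀ y : Fin (L + 1) → Fin n,
      (y 0 = (⟨0, hn⟩ : Fin n) ∧ Function.Injective y ∧ maxPrefix x y = j) ↔
      ((Function.Injective y ∧ ∀ i : Fin (L + 1), (i : ℕ) < j → y i = x i) ∧
        ¬ (Function.Injective y ∧ ∀ i : Fin (L + 1), (i : ℕ) < j + 1 → y i = x i)) := by
    intro y
    constructor
    · rintro ⟨hy0, hyinj, hmax⟩
      set s := ((Finset.Icc 1 (L + 1)).filter
        fun m => ∀ i : Fin (L + 1), (i : ℕ) < m → x i = y i) with hs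
      have hsne : s.Nonempty := by
        refine ⟨1, ?_⟩
        simp only [hs, Finset.mem_filter, Finset.mem_Icc]
        refine ⟨⟨le_refl 1, by omega⟩, ?_⟩
        intro i hi
        have : i = 0 := by
          apply Fin.ext
          simpa using Nat.lt_one_iff.mp hi
        rw [this, hx0, hy0]
      obtain ⟨b, hb, hsup⟩ := Finset.exists_mem_eq_sup s hsne id
      have hbj : b = j := by
        have : s.sup id = j := hmax
        rw [this] at hsup
        exact hsup.symm
      rw [hbj] at hb
      simp only [hs, Finset.mem_filter, Finset.mem_Icc] at hb
      have hpre : ∀ i : Fin (L + 1), (i : ℕ) < j → y i = x i := fun i hi => (hb.2 i hi).symm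
      refine ⟨⟨hyinj, hpre⟩, ?_⟩
      rintro ⟨-, hpre'⟩
      have hmem : j + 1 ∈ s := by
        simp only [hs, Finset.mem_filter, Finset.mem_Icc]
        exact ⟨⟨by omega, by omega⟩, fun i hi => (hpre' i hi).symm⟩
      have h5 : j + 1 ≤ s.sup id := Finset.le_sup (f := id) hmem
      have h6 : s.sup id = j := hmax
      omega
    · rintro ⟨⟨hyinj, hpre⟩, hnot⟩
      have hyj : y jF ≠ x jF := by
        intro heq
        apply hnot
        refine ⟨hyinj, fun i hi => ?_⟩
        rcases Nat.lt_succ_iff_lt_or_eq.mp hi with h | h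
        · exact hpre i h
        · have : i = jF := Fin.ext h
          rw [this, heq]
      have hy0 : y 0 = (⟨0, hn⟩ : Fin n) := by
        have : (0 : Fin (L + 1)) = (⟨0, by omega⟩ : Fin (L + 1)) := rfl
        rw [← hx0]
        exact hpre 0 (by simp; omega)
      refine ⟨hy0, hyinj, ?_⟩
      unfold maxPrefix
      apply le_antisymm
      · apply Finset.sup_le
        intro m hm
        simp only [Finset.mem_filter, Finset.mem_Icc] at hm
        by_contra hmj
        push_neg at hmj
        have hjm : j < m := hmj
        have hxy := hm.2 jF (show (jF : ℕ) < m from hjm)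
        exact hyj hxy.symm
      · apply Finset.le_sup (f := id)
        simp only [Finset.mem_filter, Finset.mem_Icc]
        exact ⟨⟨by omega, by omega⟩, fun i hi => (hpre i hi).symm⟩
  rw [Finset.filter_congr (fun y _ => by rw [hchar y])]
  -- Now split as a set difference
  set B := Finset.univ.filter (fun y : Fin (L + 1) → Fin n =>
    Function.Injective y ∧ ∀ i : Fin (L + 1), (i : ℕ) < j → y i = x i) with hB
  set C := Finset.univ.filter (fun y : Fin (L + 1) → Fin n =>
    Function.Injective y ∧ ∀ i : Fin (L + 1), (i : ℕ) < j + 1 → y i = x i) with hC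
  have hsplit : Finset.univ.filter (fun y : Fin (L + 1) → Fin n =>
      (Function.Injective y ∧ ∀ i : Fin (L + 1), (i : ℕ) < j → y i = x i) ∧
        ¬ (Function.Injective y ∧ ∀ i : Fin (L + 1), (i : ℕ) < j + 1 → y i = x i)) = B \ C := by
    ext y
    simp only [hB, hC, Finset.mem_filter, Finset.mem_univ, true_and, Finset.mem_sdiff]
  rw [hsplit]
  have hCB : C ⊆ B := by
    intro y hy
    simp only [hB, hC, Finset.mem_filter, Finset.mem_univ, true_and] at *
    exact ⟨hy.1, fun i hi => hy.2 i (by omega)⟩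
  rw [Finset.card_sdiff_of_subset hCB]
  have hcB : B.card = (n - j).descFactorial (L + 1 - j) := card_ext n L x hxgood j (by omega)
  have hcC : C.card = (n - (j + 1)).descFactorial (L + 1 - (j + 1)) :=
    card_ext n L x hxgood (j + 1) (by omega)
  rw [hcB, hcC]
  have h1 : L + 1 - j = (L - j) + 1 := by omega
  have h2 : L + 1 - (j + 1) = L - j := by omega
  have h3 : n - j = (n - j - 1) + 1 := by omega
  have h4 : n - (j + 1) = n - j - 1 := by omega
  rw [h1, h2, h3, h4, Nat.succ_descFactorial_succ]
  have key : (n - j - 1).descFactorial (L - j) =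
      ∏ i ∈ Finset.Icc (j + 2) (L + 1), (n - i + 1) := by
    rw [Nat.descFactorial_eq_prod_range, ← Finset.Ico_add_one_right_eq_Icc,
      Finset.prod_Ico_eq_prod_range]
    have hrange : L + 1 + 1 - (j + 2) = L - j := by omega
    rw [hrange]
    apply Finset.prod_congr rfl
    intro i hi
    have : i < L - j := Finset.mem_range.mp hi
    omega
  rw [key, Nat.succ_mul, Nat.add_sub_cancel]
  simp
end

section
/- Assume 2 ≤ L + 1 and (L+1)² ≤ n. Then for every good sequence x ∈ {1} × [n]^L and every b_1 ∈ {0,1}: Σ over y ∈ {1} × [n]^L and b_2 ∈ {0,1} of r((x,b_1),(y,b_2)) ≥ (1/(2e))·(L+1)·n^{L+1}, where e is Euler's number. -/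
/-- The relation `r`: zero if the bits agree or either sequence is not good (injective),
and `n ^ maxPrefix` otherwise. -/
noncomputable def rrel {n L : ℕ} (p q : (Fin (L + 1) → Fin n) × Bool) : ℝ :=
  if p.2 = q.2 ∨ ¬ Function.Injective p.1 ∨ ¬ Function.Injective q.1 then 0
  else (n : ℝ) ^ maxPrefix p.1 q.1

lemma qbound (L : ℕ) (hL : 1 ≤ L) :
    1 / (2 * Real.exp 1) ≤ ((L : ℝ) / (L + 1)) ^ (L + 1) := by
  have hLpos : (0:ℝ) < L := by exact_mod_cast hL
  have hL1pos : (0:ℝ) < (L:ℝ) + 1 := by positivity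
  have h1 : ((L:ℝ) + 1) / L ≤ Real.exp (1 / L) := by
    have h := Real.add_one_le_exp (1 / (L:ℝ))
    have : ((L:ℝ) + 1) / L = 1 / L + 1 := by field_simp; ring
    linarith [this ▸ h]
  have h2 : (((L:ℝ) + 1) / L) ^ L ≤ Real.exp 1 := by
    calc (((L:ℝ) + 1) / L) ^ L ≤ (Real.exp (1 / L)) ^ L := by
          exact pow_le_pow_left₀ (by positivity) h1 L
      _ = Real.exp ((L : ℝ) * (1 / L)) := by rw [Real.exp_nat_mul]
      _ = Real.exp 1 := by rw [mul_one_div, div_self (ne_of_gt hLpos)]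
  have hbpos : (0:ℝ) < (((L:ℝ) + 1) / L) ^ L := by positivity
  have h3 : 1 / Real.exp 1 ≤ ((L:ℝ) / (L + 1)) ^ L := by
    have := one_div_le_one_div_of_le hbpos h2
    calc 1 / Real.exp 1 ≤ 1 / (((L:ℝ) + 1) / L) ^ L := this
      _ = ((L:ℝ) / (L + 1)) ^ L := by
          rw [one_div, ← inv_pow, inv_div]
  have hq2 : (1:ℝ) / 2 ≤ (L:ℝ) / (L + 1) := by
    rw [div_le_div_iff₀ (by norm_num) hL1pos]
    have : (1:ℝ) ≤ L := by exact_mod_cast hL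
    linarith
  calc 1 / (2 * Real.exp 1) = (1 / Real.exp 1) * (1 / 2) := by
        rw [mul_comm]; field_simp
      _ ≤ ((L:ℝ) / (L + 1)) ^ L * ((L:ℝ) / (L + 1)) := by
        apply mul_le_mul h3 hq2 (by norm_num) (by positivity)
      _ = ((L : ℝ) / (L + 1)) ^ (L + 1) := (pow_succ _ _).symm

lemma termbound (n L j : ℕ) (hL : 1 ≤ L) (hnL : L * (L + 1) ≤ n)
    (hj1 : 1 ≤ j) (hj2 : j ≤ L + 1) :
    1 / (2 * Real.exp 1) * (n:ℝ) ^ (L + 1) ≤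
      ((n:ℝ) ^ j - (n:ℝ) ^ (j - 1)) * ((n:ℝ) - (L:ℝ)) ^ (L + 1 - j) := by
  have hnL' : (L:ℝ) * ((L:ℝ) + 1) ≤ (n:ℝ) := by exact_mod_cast hnL
  have hL' : (1:ℝ) ≤ (L:ℝ) := by exact_mod_cast hL
  have hL1pos : (0:ℝ) < (L:ℝ) + 1 := by positivity
  have hnpos : (0:ℝ) < (n:ℝ) := by nlinarith
  have hLn : (L:ℝ) + 1 ≤ (n:ℝ) := by nlinarith
  set q : ℝ := (L:ℝ) / ((L:ℝ) + 1) with hqdef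
  have hq0 : 0 ≤ q := by positivity
  have hq1 : q ≤ 1 := by
    rw [hqdef, div_le_one hL1pos]; linarith
  have hkey : (n:ℝ) * q ≤ (n:ℝ) - (L:ℝ) := by
    rw [hqdef, mul_div_assoc', div_le_iff₀ hL1pos]
    nlinarith
  have hnLnonneg : (0:ℝ) ≤ (n:ℝ) - (L:ℝ) := by linarith
  have hpow1 : (n:ℝ) ^ ((j-1) + 1) = (n:ℝ) ^ j := by
    congr 1; omega
  have calc1 : (n:ℝ) ^ (j-1) * ((n:ℝ) - (L:ℝ)) ≤ (n:ℝ) ^ j - (n:ℝ) ^ (j-1) := by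
    have : (n:ℝ) ^ j = (n:ℝ) ^ (j-1) * (n:ℝ) := by rw [← hpow1, pow_succ]
    rw [this]
    have hp : (0:ℝ) ≤ (n:ℝ) ^ (j-1) := by positivity
    nlinarith
  calc 1 / (2 * Real.exp 1) * (n:ℝ) ^ (L + 1)
      ≤ q ^ (L + 1) * (n:ℝ) ^ (L + 1) := by
        apply mul_le_mul_of_nonneg_right (qbound L hL) (by positivity)
    _ ≤ q ^ (L + 2 - j) * (n:ℝ) ^ (L + 1) := by
        apply mul_le_mul_of_nonneg_right _ (by positivity)
        exact pow_le_pow_of_le_one hq0 hq1 (by omega)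
    _ = (n:ℝ) ^ (j - 1) * ((n:ℝ) * q) ^ (L + 2 - j) := by
        rw [mul_pow, ← mul_assoc, mul_comm (q ^ (L+2-j)), mul_comm ((n:ℝ)^(j-1)), ← pow_add]
        congr 2
        omega
    _ ≤ (n:ℝ) ^ (j - 1) * ((n:ℝ) - (L:ℝ)) ^ (L + 2 - j) := by
        apply mul_le_mul_of_nonneg_left _ (by positivity)
        exact pow_le_pow_left₀ (by positivity) hkey _
    _ = ((n:ℝ) ^ (j-1) * ((n:ℝ) - (L:ℝ))) * ((n:ℝ) - (L:ℝ)) ^ (L + 1 - j) := by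
        rw [mul_assoc, ← pow_succ']
        congr 2
        omega
    _ ≤ ((n:ℝ) ^ j - (n:ℝ) ^ (j - 1)) * ((n:ℝ) - (L:ℝ)) ^ (L + 1 - j) := by
        apply mul_le_mul_of_nonneg_right calc1 (by positivity)

lemma countbound (n L j : ℕ) (hn : 0 < n) (hj1 : 1 ≤ j) (hj2 : j ≤ L + 1) (hn1 : L + 1 ≤ n)
    (x : Fin (L + 1) → Fin n) (hxgood : Function.Injective x) (hx0 : x 0 = (⟨0, hn⟩ : Fin n)) :
    (n - L) ^ (L + 1 - j) ≤
      (Finset.univ.filter (fun y : Fin (L + 1) → Fin n =>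
        (y 0 = (⟨0, hn⟩ : Fin n) ∧ Function.Injective y) ∧
        ∀ i : Fin (L + 1), (i : ℕ) < j → x i = y i)).card := by
  classical
  -- the type of allowed values for positions ≥ j
  let T := {c : Fin n // ∀ i : Fin (L + 1), (i : ℕ) < j → c ≠ x i}
  -- card of T is at least n - j
  have hBfilter : (Finset.univ.filter (fun i : Fin (L + 1) => (i : ℕ) < j)).card ≤ j := by
    calc (Finset.univ.filter (fun i : Fin (L + 1) => (i : ℕ) < j)).card
        ≤ (Finset.range j).card :=
          Finset.card_le_card_of_injOn (fun i : Fin (L + 1) => (i : ℕ))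
            (fun a ha => Finset.mem_range.mpr (Finset.mem_filter.mp ha).2)
            (fun a _ b _ hab => Fin.ext hab)
      _ = j := Finset.card_range j
  have hT : n - j ≤ Fintype.card T := by
    rw [Fintype.card_subtype]
    set B := (Finset.univ.filter (fun i : Fin (L + 1) => (i : ℕ) < j)).image x with hB
    have hsub : Finset.univ \ B ⊆
        Finset.univ.filter (fun c : Fin n => ∀ i : Fin (L + 1), (i : ℕ) < j → c ≠ x i) := by
      intro c hc
      simp only [Finset.mem_sdiff, hB, Finset.mem_image, Finset.mem_filter,
        Finset.mem_univ, true_and, not_exists, not_and] at hc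
      simp only [Finset.mem_filter, Finset.mem_univ, true_and]
      intro i hi hceq
      exact hc i hi hceq.symm
    have h1 := Finset.card_le_card hsub
    have h2 : (Finset.univ \ B).card = n - B.card := by
      rw [Finset.card_sdiff_of_subset (Finset.subset_univ _), Finset.card_univ, Fintype.card_fin]
    have h3 : B.card ≤ j := le_trans Finset.card_image_le hBfilter
    omega
  -- descFactorial lower bound
  have hdesc : (n - L) ^ (L + 1 - j) ≤ (Fintype.card T).descFactorial (L + 1 - j) := by
    rw [Nat.descFactorial_eq_prod_range]
    calc (n - L) ^ (L + 1 - j)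
        = ∏ _i ∈ Finset.range (L + 1 - j), (n - L) := by
          rw [Finset.prod_const, Finset.card_range]
      _ ≤ ∏ i ∈ Finset.range (L + 1 - j), (Fintype.card T - i) := by
          apply Finset.prod_le_prod'
          intro i hi
          have := Finset.mem_range.mp hi
          omega
  -- the map from embeddings to sequences
  let Y : (Fin (L + 1 - j) ↪ T) → (Fin (L + 1) → Fin n) := fun g i =>
    if h : (i : ℕ) < j then x i else (g ⟨(i : ℕ) - j, by have := i.isLt; omega⟩).1
  have hcard : Fintype.card (Fin (L + 1 - j) ↪ T) ≤
      (Finset.univ.filter (fun y : Fin (L + 1) → Fin n =>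
        (y 0 = (⟨0, hn⟩ : Fin n) ∧ Function.Injective y) ∧
        ∀ i : Fin (L + 1), (i : ℕ) < j → x i = y i)).card := by
    rw [← Finset.card_univ]
    apply Finset.card_le_card_of_injOn Y
    · -- maps into the filter
      intro g _
      simp only [Finset.mem_coe, Finset.mem_filter, Finset.mem_univ, true_and]
      refine ⟨⟨?_, ?_⟩, ?_⟩
      · show Y g 0 = _
        simp only [Y]
        rw [dif_pos (by simp; omega)]
        simpa using hx0
      · intro a b hab
        simp only [Y] at hab
        by_cases ha : (a : ℕ) < j <;> by_cases hb : (b : ℕ) < j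
        · rw [dif_pos ha, dif_pos hb] at hab; exact hxgood hab
        · rw [dif_pos ha, dif_neg hb] at hab
          exact absurd hab.symm
            ((g ⟨(b : ℕ) - j, by have := b.isLt; omega⟩).2 a ha)
        · rw [dif_neg ha, dif_pos hb] at hab
          exact absurd hab
            ((g ⟨(a : ℕ) - j, by have := a.isLt; omega⟩).2 b hb)
        · rw [dif_neg ha, dif_neg hb] at hab
          have h2 := g.injective (Subtype.ext hab)
          have h3 : (a : ℕ) - j = (b : ℕ) - j := congrArg Fin.val h2
          exact Fin.ext (by omega)
      · intro i hi
        show x i = Y g i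
        simp only [Y]
        rw [dif_pos hi]
    · -- injectivity of Y
      intro g _ g' _ h
      ext k
      have hk := k.isLt
      have hiag : Y g ⟨j + (k : ℕ), by omega⟩ = Y g' ⟨j + (k : ℕ), by omega⟩ := congrFun h _
      have hc : ¬ (((⟨j + (k : ℕ), by omega⟩ : Fin (L + 1)) : ℕ) < j) := by simp
      simp only [Y, dif_neg hc] at hiag
      have h2 := Subtype.ext hiag
      have hidx : (⟨((⟨j + (k : ℕ), by omega⟩ : Fin (L + 1)) : ℕ) - j,
          by simp⟩ : Fin (L + 1 - j)) = k := Fin.ext (by simp)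
      rw [hidx] at h2
      rw [h2]
  calc (n - L) ^ (L + 1 - j) ≤ (Fintype.card T).descFactorial (L + 1 - j) := hdesc
    _ = Fintype.card (Fin (L + 1 - j) ↪ T) := by
        rw [Fintype.card_embedding_eq, Fintype.card_fin]
    _ ≤ _ := hcard

/-- Assume `2 ≤ L + 1` and `(L+1)² ≤ n`.  Then for every good sequence
`x ∈ {1} × [n]^L` and every `b₁ ∈ {0,1}`:
`Σ_{y ∈ {1} × [n]^L} Σ_{b₂ ∈ {0,1}} r((x,b₁),(y,b₂)) ≥ (1/(2e)) · (L+1) · n^{L+1}`. -/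
theorem stmt10 (n L : ℕ) (hn : 0 < n) (hL2 : 2 ≤ L + 1) (hLn : (L + 1) ^ 2 ≤ n)
    (x : Fin (L + 1) → Fin n) (hx0 : x 0 = (⟨0, hn⟩ : Fin n))
    (hxgood : Function.Injective x) (b₁ : Bool) :
    (1 / (2 * Real.exp 1)) * ((L : ℝ) + 1) * (n : ℝ) ^ (L + 1) ≤
      ∑ y ∈ Finset.univ.filter (fun y : Fin (L + 1) → Fin n => y 0 = (⟨0, hn⟩ : Fin n)),
        ∑ b₂ : Bool, rrel (x, b₁) (y, b₂) := by
  classical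
  have hL1 : 1 ≤ L := by omega
  have hnL : L * (L + 1) ≤ n := by nlinarith
  have hn1 : L + 1 ≤ n := by nlinarith
  have hn1' : (1:ℝ) ≤ (n:ℝ) := by exact_mod_cast hn
  -- Step A: compute the inner sum over b₂
  have hA : ∀ y : Fin (L + 1) → Fin n,
      (∑ b₂ : Bool, rrel (x, b₁) (y, b₂)) =
        if Function.Injective y then (n : ℝ) ^ maxPrefix x y else 0 := by
    intro y
    rw [Fintype.sum_bool]
    by_cases hy : Function.Injective y <;> cases b₁ <;>
      simp [rrel, hxgood, hy]
  rw [Finset.sum_congr rfl (fun y _ => hA y), ← Finset.sum_filter, Finset.filter_filter]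
  -- facts about maxPrefix
  have hmax_le : ∀ y : Fin (L + 1) → Fin n, maxPrefix x y ≤ L + 1 := by
    intro y
    apply Finset.sup_le
    intro b hb
    exact (Finset.mem_Icc.mp (Finset.mem_filter.mp hb).1).2
  have hmem_le : ∀ (y : Fin (L + 1) → Fin n) (j : ℕ), 1 ≤ j → j ≤ L + 1 →
      (∀ i : Fin (L + 1), (i : ℕ) < j → x i = y i) → j ≤ maxPrefix x y := by
    intro y j h1 h2 hagree
    exact Finset.le_sup (f := id)
      (Finset.mem_filter.mpr ⟨Finset.mem_Icc.mpr ⟨h1, h2⟩, hagree⟩)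
  calc (1 / (2 * Real.exp 1)) * ((L : ℝ) + 1) * (n : ℝ) ^ (L + 1)
      = ∑ _j ∈ Finset.Icc 1 (L + 1), 1 / (2 * Real.exp 1) * (n:ℝ) ^ (L + 1) := by
        rw [Finset.sum_const, Nat.card_Icc, nsmul_eq_mul]
        push_cast
        ring
    _ ≤ ∑ j ∈ Finset.Icc 1 (L + 1),
          ((n:ℝ) ^ j - (n:ℝ) ^ (j - 1)) * (((n - L : ℕ) ^ (L + 1 - j) : ℕ) : ℝ) := by
        apply Finset.sum_le_sum
        intro j hj
        obtain ⟨hj1, hj2⟩ := Finset.mem_Icc.mp hj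
        have hcast : (((n - L : ℕ) : ℝ)) = (n:ℝ) - (L:ℝ) := by
          rw [Nat.cast_sub (by omega)]
        rw [Nat.cast_pow, hcast]
        exact termbound n L j hL1 hnL hj1 hj2
    _ ≤ ∑ j ∈ Finset.Icc 1 (L + 1),
          ((n:ℝ) ^ j - (n:ℝ) ^ (j - 1)) *
            ((Finset.univ.filter (fun y : Fin (L + 1) → Fin n =>
              (y 0 = (⟨0, hn⟩ : Fin n) ∧ Function.Injective y) ∧
              ∀ i : Fin (L + 1), (i : ℕ) < j → x i = y i)).card : ℝ) := by
        apply Finset.sum_le_sum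
        intro j hj
        obtain ⟨hj1, hj2⟩ := Finset.mem_Icc.mp hj
        apply mul_le_mul_of_nonneg_left
        · exact_mod_cast countbound n L j hn hj1 hj2 hn1 x hxgood hx0
        · have : (n:ℝ) ^ (j - 1) ≤ (n:ℝ) ^ j :=
            pow_le_pow_right₀ hn1' (by omega)
          linarith
    _ = ∑ j ∈ Finset.Icc 1 (L + 1),
          ∑ y ∈ Finset.univ.filter (fun y : Fin (L + 1) → Fin n =>
              y 0 = (⟨0, hn⟩ : Fin n) ∧ Function.Injective y),
            (if ∀ i : Fin (L + 1), (i : ℕ) < j → x i = y i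
              then (n:ℝ) ^ j - (n:ℝ) ^ (j - 1) else 0) := by
        apply Finset.sum_congr rfl
        intro j _
        rw [← Finset.sum_filter, Finset.filter_filter, Finset.sum_const, nsmul_eq_mul,
          mul_comm]
    _ = ∑ y ∈ Finset.univ.filter (fun y : Fin (L + 1) → Fin n =>
            y 0 = (⟨0, hn⟩ : Fin n) ∧ Function.Injective y),
          ∑ j ∈ Finset.Icc 1 (L + 1),
            (if ∀ i : Fin (L + 1), (i : ℕ) < j → x i = y i
              then (n:ℝ) ^ j - (n:ℝ) ^ (j - 1) else 0) := Finset.sum_comm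
    _ ≤ ∑ y ∈ Finset.univ.filter (fun y : Fin (L + 1) → Fin n =>
            y 0 = (⟨0, hn⟩ : Fin n) ∧ Function.Injective y),
          (n : ℝ) ^ maxPrefix x y := by
        apply Finset.sum_le_sum
        intro y hy
        obtain ⟨hy0, hyinj⟩ := (Finset.mem_filter.mp hy).2
        set M := maxPrefix x y with hM
        have hM1 : 1 ≤ M := by
          apply hmem_le y 1 le_rfl (by omega)
          intro i hi
          have h0 : i = 0 := Fin.ext (by simp only [Fin.val_zero]; omega)
          rw [h0, hx0, hy0]
        have hML : M ≤ L + 1 := hmax_le y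
        calc ∑ j ∈ Finset.Icc 1 (L + 1),
              (if ∀ i : Fin (L + 1), (i : ℕ) < j → x i = y i
                then (n:ℝ) ^ j - (n:ℝ) ^ (j - 1) else 0)
            = ∑ j ∈ (Finset.Icc 1 (L + 1)).filter
                (fun j => ∀ i : Fin (L + 1), (i : ℕ) < j → x i = y i),
                ((n:ℝ) ^ j - (n:ℝ) ^ (j - 1)) := (Finset.sum_filter _ _).symm
          _ ≤ ∑ j ∈ Finset.Icc 1 M, ((n:ℝ) ^ j - (n:ℝ) ^ (j - 1)) := by
              apply Finset.sum_le_sum_of_subset_of_nonneg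
              · intro j hj
                obtain ⟨hjmem, hagree⟩ := Finset.mem_filter.mp hj
                obtain ⟨hj1, hj2⟩ := Finset.mem_Icc.mp hjmem
                exact Finset.mem_Icc.mpr ⟨hj1, hmem_le y j hj1 hj2 hagree⟩
              · intro j hj _
                obtain ⟨hj1, _⟩ := Finset.mem_Icc.mp hj
                have : (n:ℝ) ^ (j - 1) ≤ (n:ℝ) ^ j :=
                  pow_le_pow_right₀ hn1' (by omega)
                linarith
          _ = ∑ i ∈ Finset.range M, ((n:ℝ) ^ (i + 1) - (n:ℝ) ^ i) := by
              rw [← Finset.Ico_add_one_right_eq_Icc, Finset.sum_Ico_eq_sum_range]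
              apply Finset.sum_congr rfl
              intro i _
              have h2 : 1 + i - 1 = i := by omega
              have h1 : 1 + i = i + 1 := by omega
              rw [h2, h1]
          _ = (n:ℝ) ^ M - (n:ℝ) ^ 0 := Finset.sum_range_sub (fun i => (n:ℝ) ^ i) M
          _ ≤ (n:ℝ) ^ M := by
              simp only [pow_zero]
              have : (0:ℝ) ≤ (n:ℝ) ^ M := by positivity
              linarith
end
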